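/- Let a > 0, b > 0, c > 0, α > 0 be real numbers, define h(κ) := (aκ + b)/(ακ² + c) and ν(κ) := (aκ² + bκ)/(ακ² + c) for κ > 0, and set κ₀ := √((b/a)² + c/α) − b/a and κ₁ := (c/α)·(a/b) + √(((c/α)·(a/b))² + c/α). Then κ₀ ≤ √(c/α) ≤ κ₁, and for all real s, t with κ₀ ≤ s ≤ t ≤ κ₁ one has h(s) ≥ h(t) and ν(s) ≤ ν(t); i.e., on the interval [κ₀, κ₁] the lower truncation level h is nonincreasing and the upper truncation level ν is nondecreasing in κ. -/

import Mathlib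

theorem stmt18 (a b c α : ℝ) (ha : 0 < a) (hb : 0 < b) (hc : 0 < c) (hα : 0 < α)
    (h ν : ℝ → ℝ)
    (hdef : ∀ κ : ℝ, h κ = (a * κ + b) / (α * κ ^ 2 + c))
    (hνdef : ∀ κ : ℝ, ν κ = (a * κ ^ 2 + b * κ) / (α * κ ^ 2 + c))
    (κ₀ κ₁ : ℝ)
    (hκ₀ : κ₀ = Real.sqrt ((b / a) ^ 2 + c / α) - b / a)
    (hκ₁ : κ₁ = (c / α) * (a / b) + Real.sqrt (((c / α) * (a / b)) ^ 2 + c / α)) :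
    κ₀ ≤ Real.sqrt (c / α) ∧ Real.sqrt (c / α) ≤ κ₁ ∧
    ∀ s t : ℝ, κ₀ ≤ s → s ≤ t → t ≤ κ₁ → h t ≤ h s ∧ ν s ≤ ν t := by
  have hca : 0 < c / α := div_pos hc hα
  obtain ⟨r, hr⟩ : ∃ x, x = Real.sqrt (c / α) := ⟨_, rfl⟩
  rw [← hr]
  have hr2 : r ^ 2 = c / α := by rw [hr]; exact Real.sq_sqrt hca.le
  have hr0 : 0 ≤ r := by rw [hr]; exact Real.sqrt_nonneg _
  obtain ⟨u, hu⟩ : ∃ x, x = Real.sqrt ((b / a) ^ 2 + c / α) := ⟨_, rfl⟩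
  rw [← hu] at hκ₀
  have hu2 : u ^ 2 = (b / a) ^ 2 + c / α := by rw [hu]; exact Real.sq_sqrt (by positivity)
  have hu0 : 0 ≤ u := by rw [hu]; exact Real.sqrt_nonneg _
  obtain ⟨d, hd⟩ : ∃ x, x = (c / α) * (a / b) := ⟨_, rfl⟩
  rw [← hd] at hκ₁
  have hd0 : 0 < d := by rw [hd]; positivity
  obtain ⟨v, hv⟩ : ∃ x, x = Real.sqrt (d ^ 2 + c / α) := ⟨_, rfl⟩
  rw [← hv] at hκ₁
  have hv2 : v ^ 2 = d ^ 2 + c / α := by rw [hv]; exact Real.sq_sqrt (by positivity)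
  have hv0 : 0 ≤ v := by rw [hv]; exact Real.sqrt_nonneg _
  have hba : 0 < b / a := by positivity
  -- key equations
  have hk0sq : κ₀ ^ 2 + 2 * (b / a) * κ₀ = c / α := by
    rw [hκ₀]; linear_combination hu2
  have hk1sq : κ₁ ^ 2 = 2 * d * κ₁ + c / α := by
    rw [hκ₁]; linear_combination hv2
  have hk0pos : 0 < κ₀ := by
    rw [hκ₀, sub_pos, hu]
    rw [show (b / a) ^ 2 + c / α = (b/a)^2 + c/α from rfl]
    exact (Real.lt_sqrt (by positivity)).2 (by linarith)
  have hk0r : κ₀ ≤ r := by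
    rw [hκ₀, sub_le_iff_le_add, hu]
    have h1 : (b / a) ^ 2 + c / α ≤ (r + b / a) ^ 2 := by nlinarith [hr2, hr0, hba]
    calc Real.sqrt ((b / a) ^ 2 + c / α) ≤ Real.sqrt ((r + b / a) ^ 2) :=
          Real.sqrt_le_sqrt h1
      _ = r + b / a := Real.sqrt_sq (by positivity)
  have hvd : d ≤ v := by
    rw [hv]
    exact (Real.le_sqrt hd0.le (by positivity)).2 (by linarith)
  have hrk1 : r ≤ κ₁ := by
    rw [hκ₁]
    have : r ≤ v := by
      rw [hr, hv]
      exact Real.sqrt_le_sqrt (by nlinarith [sq_nonneg d])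
    linarith
  have hk1pos : 0 < κ₁ := lt_of_lt_of_le (lt_of_lt_of_le hk0pos hk0r) hrk1
  have h2d : 2 * d ≤ κ₁ := by rw [hκ₁]; linarith [hvd]
  refine ⟨hk0r, hrk1, ?_⟩
  intro s t hs hst ht
  have hspos : 0 < s := lt_of_lt_of_le hk0pos hs
  have htpos : 0 < t := lt_of_lt_of_le hspos hst
  have hds : 0 < α * s ^ 2 + c := by positivity
  have hdt : 0 < α * t ^ 2 + c := by positivity
  -- c/α in terms of κ₀ and κ₁
  have hab : a * (b / a) = b := by field_simp
  have hca2 : α * (c / α) = c := by field_simp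
  have hbd : b * α * d = a * c := by rw [hd]; field_simp
  have hac : α * (a * κ₀ ^ 2 + 2 * b * κ₀) = a * c := by
    linear_combination (a * α) * hk0sq - (2 * α * κ₀) * hab + a * hca2
  have hbc : b * α * κ₁ ^ 2 = 2 * a * c * κ₁ + b * c := by
    linear_combination (b * α) * hk1sq + (2 * κ₁) * hbd + b * hca2
  have h2ac : 2 * a * c ≤ b * α * κ₁ := by
    linarith only [hbd, mul_nonneg (mul_nonneg hb.le hα.le) (sub_nonneg.2 h2d)]
  have key1 : a * c ≤ α * (a * (s * t) + b * (s + t)) := by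
    linarith only [hac,
      mul_nonneg (mul_nonneg (mul_nonneg hα.le ha.le) (sub_nonneg.2 hs)) htpos.le,
      mul_nonneg (mul_nonneg (mul_nonneg hα.le ha.le) hk0pos.le) (sub_nonneg.2 (hs.trans hst)),
      mul_nonneg (mul_nonneg hα.le hb.le) (by linarith : (0:ℝ) ≤ s + t - 2 * κ₀)]
  have hbat : 0 < b * α * t := by positivity
  have hq : b * α * t ^ 2 ≤ 2 * a * c * t + b * c := by
    linarith only [hbc, mul_nonneg (sub_nonneg.2 ht)
      (by linarith only [h2ac, hbat] : (0:ℝ) ≤ b * α * (κ₁ + t) - 2 * a * c)]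
  have key2 : b * α * (s * t) ≤ a * c * (s + t) + b * c := by
    have h1 : (0:ℝ) ≤ (t - s) * (a * c * t + b * c) := by
      apply mul_nonneg (sub_nonneg.2 hst)
      have := mul_pos (mul_pos ha hc) htpos
      have := mul_pos hb hc
      linarith only [this, mul_pos (mul_pos ha hc) htpos]
    have h2 : (0:ℝ) ≤ s * (2 * a * c * t + b * c - b * α * t ^ 2) :=
      mul_nonneg hspos.le (by linarith only [hq])
    have h3 : t * (b * α * (s * t)) ≤ t * (a * c * (s + t) + b * c) := by
      linarith only [h1, h2]
    exact le_of_mul_le_mul_left h3 htpos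
  constructor
  · rw [hdef, hdef, div_le_div_iff₀ hdt hds]
    linarith only [mul_nonneg (sub_nonneg.2 hst) (sub_nonneg.2 key1)]
  · rw [hνdef, hνdef, div_le_div_iff₀ hds hdt]
    linarith only [mul_nonneg (sub_nonneg.2 hst) (sub_nonneg.2 key2)]
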